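/- Achievability half of the optimistic edit-distance formula (Equation (15)): Let C be a type with decidable equality, let t and y be lists over C, and let 0 ≤ k ≤ |t|. Then the Levenshtein distance (with unit insertion, deletion and substitution costs) between y ++ t.drop k and t is at most the Levenshtein distance between y and t.take k; in particular, for every k there is a continuation of the prefix y whose edit distance to t is at most ρ_levenshtein(y, t.take k). -/

import Mathlib

namespace Levenshtein

structure Cost (α β δ : Type*) where
  delete : α → δ
  insert : β → δ
  substitute : α → β → δ

def defaultCost {α : Type*} [DecidableEq α] : Cost α α ℕ where
  delete _ := 1
  insert _ := 1
  substitute a b := if a = b then 0 else 1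

def impl {α β δ : Type*} [AddZeroClass δ] [Min δ] (C : Cost α β δ)
    (xs : List α) (y : β) (d : {r : List δ // 0 < r.length}) : {r : List δ // 0 < r.length} :=
  let ⟨ds, w⟩ := d
  xs.zip (ds.zip ds.tail) |>.foldr
    (init := ⟨[C.insert y + ds.getLast (List.length_pos_iff.mp w)], by simp⟩)
    (fun ⟨x, d₀, d₁⟩ ⟨r, w⟩ =>
      ⟨min (C.delete x + r[0]) (min (C.insert y + d₀) (C.substitute x y + d₁)) :: r, by simp⟩)

end Levenshtein

def suffixLevenshtein {α β δ : Type*} [AddZeroClass δ] [Min δ] (C : Levenshtein.Cost α β δ)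
    (xs : List α) (ys : List β) : {r : List δ // 0 < r.length} :=
  ys.foldr
    (Levenshtein.impl C xs)
    (xs.foldr (init := ⟨[0], by simp⟩) (fun a ⟨r, w⟩ => ⟨(C.delete a + r[0]) :: r, by simp⟩))

def levenshtein {α β δ : Type*} [AddZeroClass δ] [Min δ] (C : Levenshtein.Cost α β δ)
    (xs : List α) (ys : List β) : δ :=
  let ⟨r, w⟩ := suffixLevenshtein C xs ys
  r[0]

namespace LevAux

variable {α β δ : Type*} [AddZeroClass δ] [Min δ]

theorem lev_eq (C : Levenshtein.Cost α β δ) (xs : List α) (ys : List β) :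
    levenshtein C xs ys = (suffixLevenshtein C xs ys).1[0]'(suffixLevenshtein C xs ys).2 := rfl

theorem key (C : Levenshtein.Cost α β δ) (x : α) (xs : List α) (y : β)
    (S T : {r : List δ // 0 < r.length}) (a : δ) (hS : S.1 = a :: T.1) :
    (Levenshtein.impl C (x :: xs) y S).1 =
      min (C.delete x + (Levenshtein.impl C xs y T).1[0]'(Levenshtein.impl C xs y T).2)
        (min (C.insert y + a) (C.substitute x y + T.1[0]'T.2)) :: (Levenshtein.impl C xs y T).1 := by
  obtain ⟨T, hT⟩ := T
  obtain ⟨S, hS'⟩ := S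
  simp only at hS
  subst hS
  match T, hT with
  | t1 :: ts, _ => rfl

theorem head_eq (S : {r : List δ // 0 < r.length}) (a : δ) (t : List δ) (h : S.1 = a :: t) :
    S.1 = S.1[0]'S.2 :: t := by
  obtain ⟨S, w⟩ := S
  simp only at h
  subst h
  rfl

theorem suffix_cons (C : Levenshtein.Cost α β δ) (x : α) (xs : List α) (ys : List β) :
    (suffixLevenshtein C (x :: xs) ys).1 =
      levenshtein C (x :: xs) ys :: (suffixLevenshtein C xs ys).1 := by
  induction ys with
  | nil => rfl
  | cons y ys ih =>
    have hk : (suffixLevenshtein C (x :: xs) (y :: ys)).1 = _ :: (suffixLevenshtein C xs (y :: ys)).1 :=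
      key C x xs y _ _ _ ih
    rw [lev_eq]
    exact head_eq _ _ _ hk

theorem impl_nil (C : Levenshtein.Cost α β δ) (y : β) (S : {r : List δ // 0 < r.length}) :
    (Levenshtein.impl C [] y S).1 = [C.insert y + S.1.getLast (List.length_pos_iff.mp S.2)] := by
  obtain ⟨S, w⟩ := S
  rfl

theorem suffix_nil (C : Levenshtein.Cost α β δ) (ys : List β) :
    ∃ a, (suffixLevenshtein C ([] : List α) ys).1 = [a] := by
  cases ys with
  | nil => exact ⟨0, rfl⟩
  | cons y ys => exact ⟨_, impl_nil C y _⟩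

end LevAux

@[simp] theorem levenshtein_nil_nil {α β δ : Type*} [AddZeroClass δ] [Min δ]
    (C : Levenshtein.Cost α β δ) : levenshtein C ([] : List α) ([] : List β) = 0 := rfl

theorem levenshtein_cons_nil {α β δ : Type*} [AddZeroClass δ] [Min δ]
    (C : Levenshtein.Cost α β δ) (x : α) (xs : List α) :
    levenshtein C (x :: xs) ([] : List β) = C.delete x + levenshtein C xs [] := rfl

theorem levenshtein_nil_cons {α β δ : Type*} [AddZeroClass δ] [Min δ]
    (C : Levenshtein.Cost α β δ) (y : β) (ys : List β) :
    levenshtein C ([] : List α) (y :: ys) = C.insert y + levenshtein C [] ys := by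
  obtain ⟨a, ha⟩ := LevAux.suffix_nil C ys
  have h1 : levenshtein C ([] : List α) ys = a := by
    rw [LevAux.lev_eq]; simp only [ha, List.getElem_cons_zero]
  have hk : (suffixLevenshtein C ([] : List α) (y :: ys)).1 =
      [C.insert y + (suffixLevenshtein C ([] : List α) ys).1.getLast
        (List.length_pos_iff.mp (suffixLevenshtein C ([] : List α) ys).2)] :=
    LevAux.impl_nil C y _
  rw [LevAux.lev_eq C [] (y :: ys)]
  simp only [hk, List.getElem_cons_zero]
  congr 1
  rw [h1]
  have hl : ∀ (l : List δ) (h : l ≠ []), l = [a] → l.getLast h = a := by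
    rintro l h rfl; rfl
  exact hl _ _ ha

theorem levenshtein_cons_cons {α β δ : Type*} [AddZeroClass δ] [Min δ]
    (C : Levenshtein.Cost α β δ) (x : α) (xs : List α) (y : β) (ys : List β) :
    levenshtein C (x :: xs) (y :: ys) =
      min (C.delete x + levenshtein C xs (y :: ys))
        (min (C.insert y + levenshtein C (x :: xs) ys)
          (C.substitute x y + levenshtein C xs ys)) := by
  have hk : (suffixLevenshtein C (x :: xs) (y :: ys)).1 = _ :=
    LevAux.key C x xs y _ _ _ (LevAux.suffix_cons C x xs ys)
  rw [LevAux.lev_eq C (x :: xs) (y :: ys)]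
  simp only [hk, List.getElem_cons_zero]
  rfl

private theorem lev_del {C : Type*} [DecidableEq C] (x : C) (xs ys : List C) :
    levenshtein Levenshtein.defaultCost (x :: xs) ys ≤
      1 + levenshtein Levenshtein.defaultCost xs ys := by
  cases ys with
  | nil => simp [levenshtein_cons_nil, Levenshtein.defaultCost]
  | cons b ys =>
    rw [levenshtein_cons_cons]
    exact le_trans (min_le_left _ _) (by simp [Levenshtein.defaultCost])

private theorem lev_ins {C : Type*} [DecidableEq C] (y : C) (xs ys : List C) :
    levenshtein Levenshtein.defaultCost xs (y :: ys) ≤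
      1 + levenshtein Levenshtein.defaultCost xs ys := by
  cases xs with
  | nil => simp [levenshtein_nil_cons, Levenshtein.defaultCost]
  | cons a xs =>
    rw [levenshtein_cons_cons]
    exact le_trans (min_le_right _ _)
      (le_trans (min_le_left _ _) (by simp [Levenshtein.defaultCost]))

private theorem lev_self {C : Type*} [DecidableEq C] (z : List C) :
    levenshtein Levenshtein.defaultCost z z = 0 := by
  induction z with
  | nil => simp
  | cons a z ih =>
    refine le_antisymm ?_ (Nat.zero_le _)
    rw [levenshtein_cons_cons]
    refine le_trans (min_le_right _ _) (le_trans (min_le_right _ _) ?_)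
    rw [ih]
    simp [Levenshtein.defaultCost]

private theorem lev_nil_left {C : Type*} [DecidableEq C] (x : List C) :
    levenshtein Levenshtein.defaultCost ([] : List C) x = x.length := by
  induction x with
  | nil => simp
  | cons b x ih => rw [levenshtein_nil_cons, ih]; simp [Levenshtein.defaultCost, Nat.add_comm]

private theorem lev_nil_right {C : Type*} [DecidableEq C] (x : List C) :
    levenshtein Levenshtein.defaultCost x ([] : List C) = x.length := by
  induction x with
  | nil => simp
  | cons b x ih => rw [levenshtein_cons_nil, ih]; simp [Levenshtein.defaultCost, Nat.add_comm]

private theorem lev_append_suffix {C : Type*} [DecidableEq C] (z : List C) :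
    ∀ y x : List C,
      levenshtein Levenshtein.defaultCost (y ++ z) (x ++ z) ≤
        levenshtein Levenshtein.defaultCost y x := by
  intro y
  induction y with
  | nil =>
    intro x
    induction x with
    | nil => simp [lev_self]
    | cons b x ihx =>
      simp only [List.nil_append, List.cons_append] at *
      calc levenshtein Levenshtein.defaultCost z (b :: (x ++ z))
          ≤ 1 + levenshtein Levenshtein.defaultCost z (x ++ z) := lev_ins _ _ _
        _ ≤ 1 + levenshtein Levenshtein.defaultCost ([] : List C) x := by
              exact Nat.add_le_add_left ihx 1
        _ = levenshtein Levenshtein.defaultCost ([] : List C) (b :: x) := by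
              rw [lev_nil_left, lev_nil_left]; simp [Nat.add_comm]
  | cons a y ihy =>
    intro x
    induction x with
    | nil =>
      simp only [List.cons_append, List.nil_append] at *
      calc levenshtein Levenshtein.defaultCost (a :: (y ++ z)) z
          ≤ 1 + levenshtein Levenshtein.defaultCost (y ++ z) z := lev_del _ _ _
        _ ≤ 1 + levenshtein Levenshtein.defaultCost y ([] : List C) := by
              have := ihy []; simp only [List.nil_append] at this
              exact Nat.add_le_add_left this 1
        _ = levenshtein Levenshtein.defaultCost (a :: y) ([] : List C) := by
              rw [lev_nil_right, lev_nil_right]; simp [Nat.add_comm]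
    | cons b x ihx =>
      simp only [List.cons_append] at *
      rw [levenshtein_cons_cons, levenshtein_cons_cons]
      refine le_min ?_ (le_min ?_ ?_)
      · exact le_trans (min_le_left _ _)
          (Nat.add_le_add_left (by simpa using ihy (b :: x)) _)
      · exact le_trans (min_le_right _ _) (le_trans (min_le_left _ _)
          (Nat.add_le_add_left ihx _))
      · exact le_trans (min_le_right _ _) (le_trans (min_le_right _ _)
          (Nat.add_le_add_left (ihy x) _))

/-- Achievability half of the optimistic edit-distance formula
(Equation (15)): for every `0 ≤ k ≤ |t|`, appending the suffix `t.drop k`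
of the ground truth to the prefix `y` yields a continuation whose edit
distance (unit costs) to `t` is at most `ρ_levenshtein(y, t.take k)`. -/
theorem optimistic_loss_achievable {C : Type*} [DecidableEq C]
    (t y : List C) (k : ℕ) (hk : k ≤ t.length) :
    levenshtein Levenshtein.defaultCost (y ++ t.drop k) t ≤
      levenshtein Levenshtein.defaultCost y (t.take k) := by
  have := lev_append_suffix (t.drop k) y (t.take k)
  rwa [List.take_append_drop] at this
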